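/- arXiv:2002.00888 — 7 statements merged into one kernel-verified Lean document; each statement's English description precedes it below -/
import Mathlib

section
/- If (α_k x + β_k y), for 1 ≤ k ≤ 4, are pairwise non-proportional nonzero linear forms over ℂ, then their cubes (α_k x + β_k y)³ are linearly independent in ℂ[x,y]. -/
open MvPolynomial

set_option maxHeartbeats 1000000 in
private theorem det_fin_four' {R : Type*} [CommRing R] (A : Matrix (Fin 4) (Fin 4) R) :
    A.det =
      A 0 0*A 1 1*A 2 2*A 3 3 - A 0 0*A 1 1*A 2 3*A 3 2 - A 0 0*A 1 2*A 2 1*A 3 3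
      + A 0 0*A 1 2*A 2 3*A 3 1 + A 0 0*A 1 3*A 2 1*A 3 2 - A 0 0*A 1 3*A 2 2*A 3 1
      - A 0 1*A 1 0*A 2 2*A 3 3 + A 0 1*A 1 0*A 2 3*A 3 2 + A 0 1*A 1 2*A 2 0*A 3 3
      - A 0 1*A 1 2*A 2 3*A 3 0 - A 0 1*A 1 3*A 2 0*A 3 2 + A 0 1*A 1 3*A 2 2*A 3 0
      + A 0 2*A 1 0*A 2 1*A 3 3 - A 0 2*A 1 0*A 2 3*A 3 1 - A 0 2*A 1 1*A 2 0*A 3 3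
      + A 0 2*A 1 1*A 2 3*A 3 0 + A 0 2*A 1 3*A 2 0*A 3 1 - A 0 2*A 1 3*A 2 1*A 3 0
      - A 0 3*A 1 0*A 2 1*A 3 2 + A 0 3*A 1 0*A 2 2*A 3 1 + A 0 3*A 1 1*A 2 0*A 3 2
      - A 0 3*A 1 1*A 2 2*A 3 0 - A 0 3*A 1 2*A 2 0*A 3 1 + A 0 3*A 1 2*A 2 1*A 3 0 := by
  rw [Matrix.det_succ_row_zero, Fin.sum_univ_four]
  norm_num [Matrix.det_fin_three, Matrix.submatrix, Fin.succAbove, Fin.lt_def,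
    show ((3:Fin 4):ℕ) = 3 from rfl, show Fin.castSucc (2:Fin 3) = (2:Fin 4) from rfl]
  simp only [show (2:Fin 3).succ = (3:Fin 4) from rfl, if_neg (show ¬((2:Fin 4) = 0) by decide),
    if_neg (show ¬((2:Fin 3) = 0) by decide)]
  ring1

set_option maxHeartbeats 2000000 in
theorem stmt_6 (α β : Fin 4 → ℂ)
    (hne : ∀ k, (α k, β k) ≠ (0, 0))
    (hprop : ∀ j k, j ≠ k → ∀ c : ℂ, ¬(α k = c * α j ∧ β k = c * β j)) :
    LinearIndependent ℂ
      (fun k : Fin 4 =>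
        (C (α k) * X 0 + C (β k) * X 1 : MvPolynomial (Fin 2) ℂ)^3) := by
  -- The pairwise "cross terms" are nonzero
  have hfac : ∀ j k : Fin 4, j ≠ k → α j * β k - α k * β j ≠ 0 := by
    intro j k hjk h
    have h' : α j * β k = α k * β j := sub_eq_zero.mp h
    rcases eq_or_ne (α j) 0 with hα | hα
    · have hβ : β j ≠ 0 := by
        intro hβ
        exact hne j (by simp [Prod.ext_iff, hα, hβ])
      refine hprop j k hjk (β k / β j) ⟨?_, ?_⟩
      · have : α k * β j = 0 := by rw [← h', hα]; ring
        have hαk : α k = 0 := by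
          rcases mul_eq_zero.mp this with h1 | h1
          · exact h1
          · exact absurd h1 hβ
        rw [hαk, hα]; ring
      · field_simp
    · refine hprop j k hjk (α k / α j) ⟨?_, ?_⟩
      · field_simp
      · rw [div_mul_eq_mul_div, eq_div_iff hα]
        linear_combination h'
  classical
  -- the 4 monomial exponents
  set m : Fin 4 → (Fin 2 →₀ ℕ) :=
    ![Finsupp.single 0 3,
      Finsupp.single 0 2 + Finsupp.single 1 1,
      Finsupp.single 0 1 + Finsupp.single 1 2,
      Finsupp.single 1 3] with hm
  set f : MvPolynomial (Fin 2) ℂ →ₗ[ℂ] (Fin 4 → ℂ) :=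
    LinearMap.pi (fun i => lcoeff ℂ (m i)) with hf
  apply LinearIndependent.of_comp f
  have e0 : (X 0 : MvPolynomial (Fin 2) ℂ)^3 = monomial (Finsupp.single 0 3) 1 := by
    rw [X_pow_eq_monomial]
  have e1 : ((X 0)^2 * X 1 : MvPolynomial (Fin 2) ℂ) =
      monomial (Finsupp.single 0 2 + Finsupp.single 1 1) 1 := by
    rw [X_pow_eq_monomial, X, monomial_mul, one_mul]
  have e2 : ((X 0) * (X 1)^2 : MvPolynomial (Fin 2) ℂ) =
      monomial (Finsupp.single 0 1 + Finsupp.single 1 2) 1 := by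
    rw [X_pow_eq_monomial, X, monomial_mul, one_mul]
  have e3 : (X 1 : MvPolynomial (Fin 2) ℂ)^3 = monomial (Finsupp.single 1 3) 1 := by
    rw [X_pow_eq_monomial]
  -- expand the cube into monomials
  have hexp : ∀ a b : ℂ, (C a * X 0 + C b * X 1 : MvPolynomial (Fin 2) ℂ)^3 =
      monomial (m 0) (a^3) + monomial (m 1) (3*a^2*b)
        + monomial (m 2) (3*a*b^2) + monomial (m 3) (b^3) := by
    intro a b
    have : (C a * X 0 + C b * X 1 : MvPolynomial (Fin 2) ℂ)^3 =
        C (a^3) * (X 0 : MvPolynomial (Fin 2) ℂ)^3 + C (3*a^2*b) * (X 0^2 * X 1)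
          + C (3*a*b^2) * (X 0 * X 1^2) + C (b^3) * X 1^3 := by
      simp only [map_mul, map_pow, map_ofNat]
      ring
    rw [this, e0, e1, e2, e3, C_mul_monomial, C_mul_monomial, C_mul_monomial, C_mul_monomial,
      mul_one, mul_one, mul_one, mul_one]
    simp [hm]
  have hcoeff : (f ∘ fun k : Fin 4 =>
      (C (α k) * X 0 + C (β k) * X 1 : MvPolynomial (Fin 2) ℂ)^3) =
      fun k => ![(α k)^3, 3*(α k)^2*(β k), 3*(α k)*(β k)^2, (β k)^3] := by
    funext k i
    simp only [Function.comp_apply, hf, LinearMap.pi_apply, lcoeff_apply, hexp]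
    fin_cases i <;>
      simp [hm, coeff_monomial, Finsupp.ext_iff, Fin.forall_fin_two, Finsupp.single_apply,
        Finsupp.add_apply]
  rw [hcoeff]
  have hdet : Matrix.det (Matrix.of fun k => ![(α k)^3, 3*(α k)^2*(β k), 3*(α k)*(β k)^2, (β k)^3]) =
      9 * ((α 0 * β 1 - α 1 * β 0) * (α 0 * β 2 - α 2 * β 0) * (α 0 * β 3 - α 3 * β 0)
        * (α 1 * β 2 - α 2 * β 1) * (α 1 * β 3 - α 3 * β 1) * (α 2 * β 3 - α 3 * β 2)) := by
    rw [det_fin_four']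
    simp [Matrix.cons_val_succ]
    ring1
  have hdet0 : Matrix.det (Matrix.of fun k => ![(α k)^3, 3*(α k)^2*(β k), 3*(α k)*(β k)^2, (β k)^3]) ≠ 0 := by
    rw [hdet]
    refine mul_ne_zero (by norm_num) ?_
    refine mul_ne_zero (mul_ne_zero (mul_ne_zero (mul_ne_zero (mul_ne_zero ?_ ?_) ?_) ?_) ?_) ?_ <;>
      exact hfac _ _ (by decide)
  exact Matrix.linearIndependent_rows_iff_isUnit.mpr
    ((Matrix.isUnit_iff_isUnit_det _).mpr (isUnit_iff_ne_zero.mpr hdet0))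
end

section
/- If a binary cubic form p over ℂ admits two representations p = (α₁x+β₁y)³ + (α₂x+β₂y)³ = (α₃x+β₃y)³ + (α₄x+β₄y)³ with the four linear forms pairwise non-proportional, then a contradiction arises; that is, the representation of a cubic as a sum of two cubes of non-proportional linear forms is unique up to order and multiplication by cube roots of unity. -/
open MvPolynomial

/-- If the determinant of two pairs vanishes and the first pair is nonzero,
the second is a multiple of the first. -/
lemma prop_of_det_aux (a b a' b' : ℂ) (h : (a, b) ≠ (0, 0))
    (hdet : a * b' - b * a' = 0) : ∃ c : ℂ, a' = c * a ∧ b' = c * b := by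
  by_cases ha : a = 0
  · have hb : b ≠ 0 := by
      intro hb; exact h (by simp [ha, hb])
    have ha' : a' = 0 := by
      have := hdet
      rw [ha] at this
      simpa [hb] using this
    exact ⟨b' / b, by simp [ha, ha'], by field_simp⟩
  · refine ⟨a' / a, by field_simp, ?_⟩
    field_simp
    linear_combination hdet

theorem stmt_7 (α β : Fin 4 → ℂ)
    (hne : ∀ k, (α k, β k) ≠ (0, 0))
    (hprop : ∀ j k, j ≠ k → ∀ c : ℂ, ¬(α k = c * α j ∧ β k = c * β j))
    (heq : (C (α 0) * X 0 + C (β 0) * X 1 : MvPolynomial (Fin 2) ℂ)^3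
            + (C (α 1) * X 0 + C (β 1) * X 1)^3
          = (C (α 2) * X 0 + C (β 2) * X 1)^3
            + (C (α 3) * X 0 + C (β 3) * X 1)^3) :
    False := by
  -- evaluate the polynomial identity at several points
  have hev : ∀ u v : ℂ,
      (α 0 * u + β 0 * v)^3 + (α 1 * u + β 1 * v)^3
        = (α 2 * u + β 2 * v)^3 + (α 3 * u + β 3 * v)^3 := by
    intro u v
    have := congrArg (eval (fun i : Fin 2 => ![u, v] i)) heq
    simpa using this
  have eA := hev 1 0
  have eD := hev 0 1
  have e11 := hev 1 1
  have e1m1 := hev 1 (-1)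
  simp only [mul_one, mul_zero, zero_add, add_zero, mul_neg, one_mul] at eA eD e11 e1m1
  -- coefficient equations
  have EA : α 0 ^ 3 + α 1 ^ 3 = α 2 ^ 3 + α 3 ^ 3 := by linear_combination eA
  have ED : β 0 ^ 3 + β 1 ^ 3 = β 2 ^ 3 + β 3 ^ 3 := by linear_combination eD
  have EB : α 0 ^ 2 * β 0 + α 1 ^ 2 * β 1 = α 2 ^ 2 * β 2 + α 3 ^ 2 * β 3 := by
    linear_combination e11 / 6 - e1m1 / 6 - ED / 3
  have EC : α 0 * β 0 ^ 2 + α 1 * β 1 ^ 2 = α 2 * β 2 ^ 2 + α 3 * β 3 ^ 2 := by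
    linear_combination e11 / 3 - EA / 3 - ED / 3 - EB
  set D : ℂ := α 0 * β 1 - α 1 * β 0 with hD
  set E : ℂ := α 2 * β 3 - α 3 * β 2 with hE
  -- Hessian identities
  have h1 : α 0 * α 1 * D ^ 2 = α 2 * α 3 * E ^ 2 := by
    linear_combination (α 2 * β 2 ^ 2 + α 3 * β 3 ^ 2) * EA + (α 0 ^ 3 + α 1 ^ 3) * EC
      - (α 0 ^ 2 * β 0 + α 1 ^ 2 * β 1 + α 2 ^ 2 * β 2 + α 3 ^ 2 * β 3) * EB
  have h2 : (α 0 * β 1 + α 1 * β 0) * D ^ 2 = (α 2 * β 3 + α 3 * β 2) * E ^ 2 := by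
    linear_combination (β 2 ^ 3 + β 3 ^ 3) * EA + (α 0 ^ 3 + α 1 ^ 3) * ED
      - (α 2 * β 2 ^ 2 + α 3 * β 3 ^ 2) * EB - (α 0 ^ 2 * β 0 + α 1 ^ 2 * β 1) * EC
  have h3 : β 0 * β 1 * D ^ 2 = β 2 * β 3 * E ^ 2 := by
    linear_combination (β 2 ^ 3 + β 3 ^ 3) * EB + (α 0 ^ 2 * β 0 + α 1 ^ 2 * β 1) * ED
      - (α 0 * β 0 ^ 2 + α 1 * β 1 ^ 2 + α 2 * β 2 ^ 2 + α 3 * β 3 ^ 2) * EC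
  have key : (α 2 * β 0 - α 0 * β 2) * (α 2 * β 1 - α 1 * β 2) * D ^ 2 = 0 := by
    linear_combination β 2 ^ 2 * h1 - α 2 * β 2 * h2 + α 2 ^ 2 * h3
  -- D ≠ 0
  have hDne : D ≠ 0 := by
    intro h0
    obtain ⟨c, hc1, hc2⟩ := prop_of_det_aux (α 0) (β 0) (α 1) (β 1) (hne 0)
      (by linear_combination h0)
    exact hprop 0 1 (by decide) c ⟨hc1, hc2⟩
  have hfac : (α 2 * β 0 - α 0 * β 2) * (α 2 * β 1 - α 1 * β 2) = 0 := by
    have := mul_eq_zero.mp key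
    rcases this with h | h
    · exact h
    · exact absurd (pow_eq_zero_iff (by norm_num) |>.mp h) hDne
  rcases mul_eq_zero.mp hfac with h | h
  · obtain ⟨c, hc1, hc2⟩ := prop_of_det_aux (α 0) (β 0) (α 2) (β 2) (hne 0)
      (by linear_combination -h)
    exact hprop 0 2 (by decide) c ⟨hc1, hc2⟩
  · obtain ⟨c, hc1, hc2⟩ := prop_of_det_aux (α 1) (β 1) (α 2) (β 2) (hne 1)
      (by linear_combination -h)
    exact hprop 1 2 (by decide) c ⟨hc1, hc2⟩
end

section
/- If f₁ and f₂ are relatively prime binary quadratic forms over ℂ, then there is an invertible linear change of variables M such that both f₁∘M and f₂∘M are even, i.e., of the form ax² + cy² (no xy term). -/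
open MvPolynomial

/-- Composition of a binary form with a linear change of variables given by a matrix. -/
noncomputable def comp2 (f : MvPolynomial (Fin 2) ℂ) (M : Matrix (Fin 2) (Fin 2) ℂ) :
    MvPolynomial (Fin 2) ℂ :=
  aeval (fun i : Fin 2 => C (M i 0) * X 0 + C (M i 1) * X 1) f

/-- A binary quadratic form is even if its `xy` coefficient vanishes. -/
def IsEvenQuad (f : MvPolynomial (Fin 2) ℂ) : Prop :=
  MvPolynomial.coeff (Finsupp.single 0 1 + Finsupp.single 1 1) f = 0

local notation "e20" => (Finsupp.single 0 2 : Fin 2 →₀ ℕ)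
local notation "e11" => ((Finsupp.single 0 1 + Finsupp.single 1 1) : Fin 2 →₀ ℕ)
local notation "e02" => (Finsupp.single 1 2 : Fin 2 →₀ ℕ)

lemma StmtNine.ne_2011 : e20 ≠ e11 := by
  intro h; have := DFunLike.congr_fun h 1; simp [Finsupp.single_apply] at this

lemma StmtNine.ne_0211 : e02 ≠ e11 := by
  intro h; have := DFunLike.congr_fun h 0; simp [Finsupp.single_apply] at this

lemma StmtNine.ne_2002 : e20 ≠ e02 := by
  intro h; have := DFunLike.congr_fun h 0; simp [Finsupp.single_apply] at this

lemma StmtNine.fin2_finsupp_eq (m : Fin 2 →₀ ℕ) :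
    m = Finsupp.single 0 (m 0) + Finsupp.single 1 (m 1) := by
  ext i; fin_cases i <;> simp [Finsupp.single_apply]

lemma StmtNine.fin2_degree (m : Fin 2 →₀ ℕ) : m.degree = m 0 + m 1 := by
  rw [Finsupp.degree_apply, Finset.sum_subset (Finset.subset_univ m.support)
    (fun x _ hx => Finsupp.notMem_support_iff.mp hx), Fin.sum_univ_two]

open StmtNine in
lemma StmtNine.hom2_eq (f : MvPolynomial (Fin 2) ℂ) (h : f.IsHomogeneous 2) :
    f = C (coeff e20 f) * X 0 ^ 2 + C (coeff e11 f) * (X 0 * X 1) + C (coeff e02 f) * X 1 ^ 2 := by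
  have hX01 : (X 0 * X 1 : MvPolynomial (Fin 2) ℂ) = monomial e11 1 := by
    rw [X, X, monomial_mul]; norm_num
  ext m
  rw [coeff_add, coeff_add, hX01, X_pow_eq_monomial, X_pow_eq_monomial,
    C_mul_monomial, C_mul_monomial, C_mul_monomial, coeff_monomial, coeff_monomial,
    coeff_monomial]
  by_cases hdeg : m 0 + m 1 = 2
  · have hcase : (m 0 = 2 ∧ m 1 = 0) ∨ (m 0 = 1 ∧ m 1 = 1) ∨ (m 0 = 0 ∧ m 1 = 2) := by omega
    have hm := fin2_finsupp_eq m
    rcases hcase with ⟨h0, h1⟩ | ⟨h0, h1⟩ | ⟨h0, h1⟩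
    · rw [h0, h1, Finsupp.single_zero, add_zero] at hm; subst hm
      rw [if_pos rfl, if_neg ne_2011.symm, if_neg ne_2002.symm]; ring
    · rw [h0, h1] at hm; subst hm
      rw [if_neg ne_2011, if_pos rfl, if_neg ne_0211]; ring
    · rw [h0, h1, Finsupp.single_zero, zero_add] at hm; subst hm
      rw [if_neg ne_2002, if_neg ne_0211.symm, if_pos rfl]; ring
  · have hz : coeff m f = 0 := h.coeff_eq_zero (by rw [fin2_degree]; exact hdeg)
    have h1 : e20 ≠ m := by intro hh; rw [← hh] at hdeg; simp [Finsupp.single_apply] at hdeg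
    have h2 : e11 ≠ m := by intro hh; rw [← hh] at hdeg; simp [Finsupp.single_apply] at hdeg
    have h3 : e02 ≠ m := by intro hh; rw [← hh] at hdeg; simp [Finsupp.single_apply] at hdeg
    rw [hz, if_neg h1, if_neg h2, if_neg h3]; ring

open StmtNine in
lemma StmtNine.coeff_xy_linmul (α β γ δ : ℂ) :
    coeff e11 ((C α * X 0 + C β * X 1) * (C γ * X 0 + C δ * X 1)) = α*δ + β*γ := by
  have hX01 : (X 0 * X 1 : MvPolynomial (Fin 2) ℂ) = monomial e11 1 := by
    rw [X, X, monomial_mul]; norm_num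
  have hexp : ((C α * X 0 + C β * X 1) * (C γ * X 0 + C δ * X 1) : MvPolynomial (Fin 2) ℂ)
      = C (α*γ) * X 0 ^ 2 + C (α*δ + β*γ) * (X 0 * X 1) + C (β*δ) * X 1 ^ 2 := by
    simp only [map_mul, map_add]; ring
  rw [hexp, coeff_add, coeff_add, hX01, X_pow_eq_monomial, X_pow_eq_monomial,
    C_mul_monomial, C_mul_monomial, C_mul_monomial, coeff_monomial, coeff_monomial,
    coeff_monomial, if_neg ne_2011, if_pos rfl, if_neg ne_0211]
  ring

open StmtNine in
lemma StmtNine.coeff_xy_comp2 (a b c : ℂ) (M : Matrix (Fin 2) (Fin 2) ℂ) :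
    coeff e11 (comp2 (C a * X 0 ^ 2 + C b * (X 0 * X 1) + C c * X 1 ^ 2) M)
      = 2*a*(M 0 0)*(M 0 1) + b*((M 0 0)*(M 1 1) + (M 0 1)*(M 1 0)) + 2*c*(M 1 0)*(M 1 1) := by
  simp only [comp2, map_add, map_mul, map_pow, aeval_X, aeval_C, algebraMap_eq, sq]
  rw [coeff_add, coeff_add, coeff_C_mul, coeff_C_mul, coeff_C_mul,
    coeff_xy_linmul, coeff_xy_linmul, coeff_xy_linmul]
  ring

lemma StmtNine.quad_root (r s t : ℂ) :
    ∃ p q : ℂ, ¬(p = 0 ∧ q = 0) ∧ r*p^2 + s*p*q + t*q^2 = 0 := by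
  by_cases hr : r = 0
  · exact ⟨1, 0, by simp, by simp [hr]⟩
  · obtain ⟨w, hw⟩ := IsAlgClosed.exists_pow_nat_eq (k := ℂ) (s^2 - 4*r*t) (n := 2) two_pos
    refine ⟨(-s + w)/(2*r), 1, by simp, ?_⟩
    field_simp
    linear_combination hw

open StmtNine in
lemma StmtNine.scalar_main (a₁ b₁ c₁ a₂ b₂ c₂ : ℂ)
    (H : ∀ p q : ℂ, ¬(p = 0 ∧ q = 0) → a₁*p^2+b₁*p*q+c₁*q^2 = 0 →
      a₂*p^2+b₂*p*q+c₂*q^2 = 0 → False) :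
    ∃ α β γ δ : ℂ, α*δ - β*γ ≠ 0 ∧
      2*a₁*α*β + b₁*(α*δ+β*γ) + 2*c₁*γ*δ = 0 ∧
      2*a₂*α*β + b₂*(α*δ+β*γ) + 2*c₂*γ*δ = 0 := by
  obtain ⟨p, q, hpq, hQ⟩ := quad_root (2*a₁*b₂-2*a₂*b₁) (4*a₁*c₂-4*a₂*c₁) (2*b₁*c₂-2*b₂*c₁)
  by_cases hXY : 2*a₁*p+b₁*q = 0 ∧ b₁*p+2*c₁*q = 0
  · obtain ⟨hX0, hY0⟩ := hXY
    have hf1 : a₁*p^2+b₁*p*q+c₁*q^2 = 0 := by linear_combination (p * hX0 + q * hY0)/2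
    by_cases hZW : 2*a₂*p+b₂*q = 0 ∧ b₂*p+2*c₂*q = 0
    · exact absurd (H p q hpq hf1 (by linear_combination (p * hZW.1 + q * hZW.2)/2)) (by simp)
    · refine ⟨-(b₂*p+2*c₂*q), p, 2*a₂*p+b₂*q, q, ?_,
        by linear_combination (-(b₂*p+2*c₂*q)) * hX0 + (2*a₂*p+b₂*q) * hY0, by ring⟩
      intro h0
      have hf2 : a₂*p^2+b₂*p*q+c₂*q^2 = 0 := by linear_combination (-h0)/2
      exact H p q hpq hf1 hf2
  · refine ⟨-(b₁*p+2*c₁*q), p, 2*a₁*p+b₁*q, q, ?_, by ring, by linear_combination hQ⟩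
    intro h0
    have hf1 : a₁*p^2+b₁*p*q+c₁*q^2 = 0 := by linear_combination (-h0)/2
    have hf2 : a₂*p^2+b₂*p*q+c₂*q^2 = 0 := by
      rcases (not_and_or.mp hXY) with hx | hy
      · have : (2*a₁*p+b₁*q) * (p*(2*a₂*p+b₂*q) + q*(b₂*p+2*c₂*q)) = 0 := by
          linear_combination q * hQ + (2*a₂*p+b₂*q) * (2*hf1)
        rcases mul_eq_zero.mp this with h | h
        · exact absurd h hx
        · linear_combination h/2
      · have : (b₁*p+2*c₁*q) * (p*(2*a₂*p+b₂*q) + q*(b₂*p+2*c₂*q)) = 0 := by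
          linear_combination (-p) * hQ + (b₂*p+2*c₂*q) * (2*hf1)
        rcases mul_eq_zero.mp this with h | h
        · exact absurd h hy
        · linear_combination h/2
    exact H p q hpq hf1 hf2

lemma StmtNine.eval_quad (a b c p q : ℂ) :
    eval ![p, q] (C a * X 0 ^ 2 + C b * (X 0 * X 1) + C c * X 1 ^ 2)
      = a*p^2 + b*(p*q) + c*q^2 := by
  simp

lemma StmtNine.root_factor_coeffs (a b c p q : ℂ) (hpq : ¬(p = 0 ∧ q = 0))
    (hroot : a*p^2 + b*(p*q) + c*q^2 = 0) :
    ∃ u w : ℂ, a = q*u ∧ b = q*w - p*u ∧ c = -(p*w) := by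
  rcases not_and_or.mp hpq with hp | hq
  · refine ⟨-((q*c+b*p)/p^2), -(c/p), ?_, ?_, ?_⟩
    · field_simp; linear_combination hroot
    · field_simp; ring
    · field_simp
  · refine ⟨a/q, (b*q+p*a)/q^2, ?_, ?_, ?_⟩
    · field_simp
    · field_simp; ring
    · field_simp; linear_combination hroot

open StmtNine in
lemma StmtNine.root_dvd (a b c p q : ℂ) (hpq : ¬(p = 0 ∧ q = 0))
    (hroot : a*p^2 + b*(p*q) + c*q^2 = 0) :
    (C q * X 0 - C p * X 1 : MvPolynomial (Fin 2) ℂ) ∣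
      (C a * X 0 ^ 2 + C b * (X 0 * X 1) + C c * X 1 ^ 2) := by
  obtain ⟨u, w, ha, hb, hc⟩ := root_factor_coeffs a b c p q hpq hroot
  refine ⟨C u * X 0 + C w * X 1, ?_⟩
  rw [ha, hb, hc]
  simp only [map_mul, map_sub, map_neg]
  ring

lemma StmtNine.lin_not_unit (p q : ℂ) (hpq : ¬(p = 0 ∧ q = 0)) :
    ¬ IsUnit (C q * X 0 - C p * X 1 : MvPolynomial (Fin 2) ℂ) := by
  intro h
  have := h.map (eval (fun _ : Fin 2 => (0 : ℂ)))
  simp at this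

theorem stmt_9 (f₁ f₂ : MvPolynomial (Fin 2) ℂ)
    (h₁ : f₁.IsHomogeneous 2) (h₂ : f₂.IsHomogeneous 2)
    (hcop : ∀ d : MvPolynomial (Fin 2) ℂ, d ∣ f₁ → d ∣ f₂ → IsUnit d) :
    ∃ M : Matrix (Fin 2) (Fin 2) ℂ, IsUnit M.det ∧
      IsEvenQuad (comp2 f₁ M) ∧ IsEvenQuad (comp2 f₂ M) := by
  have hf1 := StmtNine.hom2_eq f₁ h₁
  have hf2 := StmtNine.hom2_eq f₂ h₂
  have H : ∀ p q : ℂ, ¬(p = 0 ∧ q = 0) →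
      (coeff e20 f₁)*p^2 + (coeff e11 f₁)*p*q + (coeff e02 f₁)*q^2 = 0 →
      (coeff e20 f₂)*p^2 + (coeff e11 f₂)*p*q + (coeff e02 f₂)*q^2 = 0 → False := by
    intro p q hpq r1 r2
    have d1 : (C q * X 0 - C p * X 1 : MvPolynomial (Fin 2) ℂ) ∣ f₁ := by
      rw [hf1]; exact StmtNine.root_dvd _ _ _ p q hpq (by linear_combination r1)
    have d2 : (C q * X 0 - C p * X 1 : MvPolynomial (Fin 2) ℂ) ∣ f₂ := by
      rw [hf2]; exact StmtNine.root_dvd _ _ _ p q hpq (by linear_combination r2)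
    exact StmtNine.lin_not_unit p q hpq (hcop _ d1 d2)
  obtain ⟨α, β, γ, δ, hdet, hc1, hc2⟩ := StmtNine.scalar_main _ _ _ _ _ _ H
  refine ⟨!![α, β; γ, δ], ?_, ?_, ?_⟩
  · rw [Matrix.det_fin_two_of]; exact isUnit_iff_ne_zero.mpr hdet
  · show coeff e11 (comp2 f₁ _) = 0
    rw [hf1, StmtNine.coeff_xy_comp2]
    simp only [Matrix.cons_val', Matrix.cons_val_zero, Matrix.cons_val_one, Matrix.head_cons,
      Matrix.empty_val', Matrix.cons_val_fin_one, Matrix.head_fin_const, Matrix.of_apply]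
    linear_combination hc1
  · show coeff e11 (comp2 f₂ _) = 0
    rw [hf2, StmtNine.coeff_xy_comp2]
    simp only [Matrix.cons_val', Matrix.cons_val_zero, Matrix.cons_val_one, Matrix.head_cons,
      Matrix.empty_val', Matrix.cons_val_fin_one, Matrix.head_fin_const, Matrix.of_apply]
    linear_combination hc2
end

section
/- Suppose binary quadratic forms f₁, f₂, f₃, f₄ over ℂ are pairwise non-proportional, satisfy f₁³ + f₂³ = f₃³ + f₄³ and f₁ + f₂ = T(f₃ + f₄) for some T ∈ ℂ. Then T ≠ 0 and T³ ≠ 1. -/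
/-- Two binary forms are non-proportional if neither is a scalar multiple of the other. -/
def NonProp (f g : MvPolynomial (Fin 2) ℂ) : Prop :=
  (∀ c : ℂ, g ≠ c • f) ∧ (∀ c : ℂ, f ≠ c • g)

theorem stmt_12 (f₁ f₂ f₃ f₄ : MvPolynomial (Fin 2) ℂ) (T : ℂ)
    (h₁ : f₁.IsHomogeneous 2) (h₂ : f₂.IsHomogeneous 2)
    (h₃ : f₃.IsHomogeneous 2) (h₄ : f₄.IsHomogeneous 2)
    (hp : NonProp f₁ f₂ ∧ NonProp f₁ f₃ ∧ NonProp f₁ f₄ ∧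
          NonProp f₂ f₃ ∧ NonProp f₂ f₄ ∧ NonProp f₃ f₄)
    (heq : f₁^3 + f₂^3 = f₃^3 + f₄^3)
    (hT : f₁ + f₂ = T • (f₃ + f₄)) :
    T ≠ 0 ∧ T^3 ≠ 1 := by
  obtain ⟨h12, h13, h14, h23, h24, h34⟩ := hp
  set t : MvPolynomial (Fin 2) ℂ := MvPolynomial.C T with ht
  have hT' : f₁ + f₂ = t * (f₃ + f₄) := by
    rw [hT, MvPolynomial.smul_eq_C_mul]
  have hB : f₃ + f₄ ≠ 0 := by
    intro h
    exact h34.1 (-1) (by rw [neg_one_smul]; linear_combination h)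
  constructor
  · intro h0
    apply h12.1 (-1)
    rw [neg_one_smul]
    have : f₁ + f₂ = 0 := by rw [hT, h0, zero_smul]
    linear_combination this
  · intro h3'
    have ht3 : t ^ 3 = 1 := by
      rw [ht, ← map_pow, h3', map_one]
    have hkey : (3 : MvPolynomial (Fin 2) ℂ) * (f₃ + f₄) * (f₃ * f₄ - t * (f₁ * f₂)) = 0 := by
      linear_combination heq +
        (3*f₁*f₂ - (f₁+f₂)^2 - (f₁+f₂)*t*(f₃+f₄) - t^2*(f₃+f₄)^2) * hT' -
        (f₃+f₄)^3 * ht3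
    have h3ne : (3 : MvPolynomial (Fin 2) ℂ) ≠ 0 := by
      have : ((3:ℕ) : MvPolynomial (Fin 2) ℂ) ≠ 0 := Nat.cast_ne_zero.mpr (by norm_num)
      simpa using this
    have hP : f₃ * f₄ = t * (f₁ * f₂) := by
      rcases mul_eq_zero.mp hkey with h | h
      · rcases mul_eq_zero.mp h with h | h
        · exact absurd h h3ne
        · exact absurd h hB
      · linear_combination h
    have hprod : (f₃ - t^2 * f₁) * (f₃ - t^2 * f₂) = 0 := by
      linear_combination (-t^2*f₃) * hT' + (t*f₁*f₂ - f₃*(f₃+f₄)) * ht3 - hP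
    rcases mul_eq_zero.mp hprod with h | h
    · apply h13.1 (T^2)
      rw [MvPolynomial.smul_eq_C_mul, map_pow]
      linear_combination h
    · apply h23.1 (T^2)
      rw [MvPolynomial.smul_eq_C_mul, map_pow]
      linear_combination h
end

section
/- There is no honest solution to f₁³ + f₂³ = f₃³ + f₄³ with f_j ∈ ℚ[x,y] binary quadratic forms satisfying f₁ + f₂ = 2(f₃ + f₄); i.e., no rational Type(2) family exists. -/
/-- Two rational binary forms are non-proportional if neither is a scalar multiple
of the other. -/
def NonPropQ (f g : MvPolynomial (Fin 2) ℚ) : Prop :=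
  (∀ c : ℚ, g ≠ c • f) ∧ (∀ c : ℚ, f ≠ c • g)

lemma zmod3_first : ∀ x y z : ZMod 3, 7*x^2+6*y^2=3*z^2 → x = 0 := by decide

lemma zmod3_second : ∀ x y z : ZMod 3, 21*x^2+2*y^2=z^2 → y = 0 ∧ z = 0 := by decide

lemma int_descent : ∀ n : ℕ, ∀ a b c : ℤ, a.natAbs + b.natAbs + c.natAbs ≤ n →
    7*a^2 + 6*b^2 = 3*c^2 → a = 0 := by
  intro n
  induction n using Nat.strong_induction_on with
  | _ n ih =>
    intro a b c hn h
    -- 3 ∣ a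
    have h3 : ((a : ZMod 3)) = 0 := by
      have := congrArg (fun z : ℤ => (z : ZMod 3)) h
      push_cast at this
      exact zmod3_first _ _ _ this
    obtain ⟨a1, rfl⟩ : (3 : ℤ) ∣ a := (ZMod.intCast_zmod_eq_zero_iff_dvd a 3).mp h3
    have h2 : 21*a1^2 + 2*b^2 = c^2 := by nlinarith [h]
    have hbc : ((b : ZMod 3)) = 0 ∧ ((c : ZMod 3)) = 0 := by
      have := congrArg (fun z : ℤ => (z : ZMod 3)) h2
      push_cast at this
      exact zmod3_second _ _ _ this
    obtain ⟨b1, rfl⟩ : (3 : ℤ) ∣ b := (ZMod.intCast_zmod_eq_zero_iff_dvd b 3).mp hbc.1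
    obtain ⟨c1, rfl⟩ : (3 : ℤ) ∣ c := (ZMod.intCast_zmod_eq_zero_iff_dvd c 3).mp hbc.2
    have h' : 7*a1^2 + 6*b1^2 = 3*c1^2 := by nlinarith [h]
    rcases Nat.eq_zero_or_pos (a1.natAbs + b1.natAbs + c1.natAbs) with h0 | hpos
    · have : a1 = 0 := by omega
      simp [this]
    · have hlt : a1.natAbs + b1.natAbs + c1.natAbs < n := by
        have e1 : (3*a1).natAbs = 3 * a1.natAbs := by simp [Int.natAbs_mul]
        have e2 : (3*b1).natAbs = 3 * b1.natAbs := by simp [Int.natAbs_mul]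
        have e3 : (3*c1).natAbs = 3 * c1.natAbs := by simp [Int.natAbs_mul]
        omega
      have : a1 = 0 := ih _ hlt a1 b1 c1 le_rfl h'
      simp [this]

lemma rat_key (a b c : ℚ) (h : 7*a^2 + 6*b^2 = 3*c^2) : a = 0 := by
  have had : ((a.den : ℚ)) ≠ 0 := by exact_mod_cast a.den_ne_zero
  have hbd : ((b.den : ℚ)) ≠ 0 := by exact_mod_cast b.den_ne_zero
  have hcd : ((c.den : ℚ)) ≠ 0 := by exact_mod_cast c.den_ne_zero
  have ha : (a.num : ℚ) = a * a.den := (div_eq_iff had).mp (Rat.num_div_den a)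
  have hb : (b.num : ℚ) = b * b.den := (div_eq_iff hbd).mp (Rat.num_div_den b)
  have hc : (c.num : ℚ) = c * c.den := (div_eq_iff hcd).mp (Rat.num_div_den c)
  set A : ℤ := a.num * b.den * c.den with hA
  set B : ℤ := b.num * a.den * c.den with hB
  set C : ℤ := c.num * a.den * b.den with hC
  have hZQ : 7*(A:ℚ)^2 + 6*(B:ℚ)^2 = 3*(C:ℚ)^2 := by
    push_cast [hA, hB, hC]
    rw [ha, hb, hc]
    linear_combination ((a.den : ℚ) * b.den * c.den)^2 * h
  have hZ : 7*A^2 + 6*B^2 = 3*C^2 := by exact_mod_cast hZQ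
  have hA0 : A = 0 := int_descent _ A B C le_rfl hZ
  have : a.num = 0 := by
    have hb0 : (b.den : ℤ) ≠ 0 := by exact_mod_cast b.den_ne_zero
    have hc0 : (c.den : ℤ) ≠ 0 := by exact_mod_cast c.den_ne_zero
    rcases mul_eq_zero.mp hA0 with h' | h'
    · rcases mul_eq_zero.mp h' with h'' | h''
      · exact h''
      · exact absurd h'' hb0
    · exact absurd h' hc0
  exact Rat.num_eq_zero.mp this

theorem stmt_15 :
    ¬ ∃ f₁ f₂ f₃ f₄ : MvPolynomial (Fin 2) ℚ,
      f₁.IsHomogeneous 2 ∧ f₂.IsHomogeneous 2 ∧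
      f₃.IsHomogeneous 2 ∧ f₄.IsHomogeneous 2 ∧
      NonPropQ f₁ f₂ ∧ NonPropQ f₁ f₃ ∧ NonPropQ f₁ f₄ ∧
      NonPropQ f₂ f₃ ∧ NonPropQ f₂ f₄ ∧ NonPropQ f₃ f₄ ∧
      f₁^3 + f₂^3 = f₃^3 + f₄^3 ∧ f₁^3 + f₂^3 ≠ 0 ∧
      f₁ + f₂ = 2 * (f₃ + f₄) := by
  rintro ⟨f1, f2, f3, f4, -, -, -, -, -, -, -, -, -, -, heq, hne, hsum⟩
  have key : (f3 + f4) * (7*(f3+f4)^2 + 6*(f1-f2)^2 - 3*(f3-f4)^2) = 0 := by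
    linear_combination 4*heq -
      (4*(f3+f4)^2 + 2*(f3+f4)*(f1+f2) + (f1+f2)^2 + 3*(f1-f2)^2) * hsum
  have contra : f3 + f4 = 0 → False := by
    intro ht
    apply hne
    have hs0 : f1 + f2 = 0 := by rw [hsum, ht, mul_zero]
    linear_combination (f1^2 - f1*f2 + f2^2) * hs0
  rcases mul_eq_zero.mp key with ht | h7
  · exact contra ht
  · apply contra
    apply MvPolynomial.funext
    intro p
    have h2 := congrArg (MvPolynomial.eval p) h7
    simp only [map_add, map_sub, map_mul, map_pow, map_zero, map_ofNat] at h2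
    have := rat_key (MvPolynomial.eval p (f3 + f4) )
      (MvPolynomial.eval p (f1 - f2)) (MvPolynomial.eval p (f3 - f4)) (by
        simp only [map_add, map_sub] at h2 ⊢ ; linarith)
    simp only [map_add, map_zero] at this ⊢
    linarith
end

section
/- In any honest solution to f₁³ + f₂³ = f₃³ + f₄³ with f_j real binary quadratic forms satisfying f₁ + f₂ = T(f₃ + f₄) for some real T with T(T³−1) ≠ 0, one must have T > 0. -/
/-- Two real binary forms are non-proportional if neither is a scalar multiple
of the other. -/
def NonPropR (f g : MvPolynomial (Fin 2) ℝ) : Prop :=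
  (∀ c : ℝ, g ≠ c • f) ∧ (∀ c : ℝ, f ≠ c • g)

theorem stmt_16 (f₁ f₂ f₃ f₄ : MvPolynomial (Fin 2) ℝ) (T : ℝ)
    (h₁ : f₁.IsHomogeneous 2) (h₂ : f₂.IsHomogeneous 2)
    (h₃ : f₃.IsHomogeneous 2) (h₄ : f₄.IsHomogeneous 2)
    (hp : NonPropR f₁ f₂ ∧ NonPropR f₁ f₃ ∧ NonPropR f₁ f₄ ∧
          NonPropR f₂ f₃ ∧ NonPropR f₂ f₄ ∧ NonPropR f₃ f₄)
    (heq : f₁^3 + f₂^3 = f₃^3 + f₄^3) (hne : f₁^3 + f₂^3 ≠ 0)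
    (hT : f₁ + f₂ = T • (f₃ + f₄)) (hT0 : T * (T^3 - 1) ≠ 0) :
    0 < T := by
  by_contra hcon
  push_neg at hcon
  have hTne : T ≠ 0 := fun h => hT0 (by rw [h]; ring)
  have hTneg : T < 0 := lt_of_le_of_ne hcon hTne
  -- f₃ + f₄ ≠ 0
  have h34 : f₃ + f₄ ≠ 0 := by
    intro h
    have : f₄ = (-1 : ℝ) • f₃ := by
      have : f₄ = -f₃ := by linear_combination h
      simpa using this
    exact hp.2.2.2.2.2.1 (-1) this
  have hT' : f₁ + f₂ = MvPolynomial.C T * (f₃ + f₄) := by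
    rw [hT, MvPolynomial.smul_eq_C_mul]
  -- cancellation: C T * Q₁ = Q₂
  have hfac : (f₃ + f₄) * (MvPolynomial.C T * (f₁^2 - f₁*f₂ + f₂^2))
      = (f₃ + f₄) * (f₃^2 - f₃*f₄ + f₄^2) := by
    calc (f₃ + f₄) * (MvPolynomial.C T * (f₁^2 - f₁*f₂ + f₂^2))
        = (MvPolynomial.C T * (f₃ + f₄)) * (f₁^2 - f₁*f₂ + f₂^2) := by ring
      _ = (f₁ + f₂) * (f₁^2 - f₁*f₂ + f₂^2) := by rw [← hT']
      _ = f₁^3 + f₂^3 := by ring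
      _ = f₃^3 + f₄^3 := heq
      _ = (f₃ + f₄) * (f₃^2 - f₃*f₄ + f₄^2) := by ring
  have hkey : MvPolynomial.C T * (f₁^2 - f₁*f₂ + f₂^2) = f₃^2 - f₃*f₄ + f₄^2 :=
    mul_left_cancel₀ h34 hfac
  apply h34
  apply MvPolynomial.funext
  intro x
  have he := congrArg (MvPolynomial.eval x) hkey
  simp only [map_mul, map_add, map_sub, map_pow, MvPolynomial.eval_C] at he
  set a := MvPolynomial.eval x f₁
  set b := MvPolynomial.eval x f₂
  set c := MvPolynomial.eval x f₃
  set d := MvPolynomial.eval x f₄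
  have hQ1 : 0 ≤ a^2 - a*b + b^2 := by nlinarith [sq_nonneg (a-b), sq_nonneg (a+b)]
  have hQ2nonpos : c^2 - c*d + d^2 ≤ 0 := by
    rw [← he]
    exact mul_nonpos_of_nonpos_of_nonneg (le_of_lt hTneg) hQ1
  have hc : c = 0 ∧ d = 0 := by
    constructor <;> nlinarith [sq_nonneg (c-d), sq_nonneg (c+d)]
  simp only [map_add, map_zero]
  show c + d = 0
  rw [hc.1, hc.2, add_zero]
end

section
/- The binary sextic (x² + y²)³ cannot be written as f₁³ + f₂³ for non-proportional binary quadratic forms f₁, f₂ over ℂ. -/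
open MvPolynomial

lemma rep2 {f : MvPolynomial (Fin 2) ℂ} (hf : f.IsHomogeneous 2) :
    ∃ a b c : ℂ, f = C a * X 0 ^ 2 + C b * (X 0 * X 1) + C c * X 1 ^ 2 := by
  refine ⟨coeff (Finsupp.single 0 2) f,
    coeff (Finsupp.single 0 1 + Finsupp.single 1 1) f, coeff (Finsupp.single 1 2) f, ?_⟩
  have hX2 : ∀ i : Fin 2, (X i : MvPolynomial (Fin 2) ℂ) ^ 2 = monomial (Finsupp.single i 2) 1 :=
    fun i => X_pow_eq_monomial
  have hXX : (X 0 * X 1 : MvPolynomial (Fin 2) ℂ)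
      = monomial (Finsupp.single 0 1 + Finsupp.single 1 1) 1 := by
    rw [X, X, monomial_mul, one_mul]
  ext m
  rw [coeff_add, coeff_add, hX2, hX2, hXX, C_mul_monomial, C_mul_monomial, C_mul_monomial,
    coeff_monomial, coeff_monomial, coeff_monomial]
  have hmrep : m = Finsupp.single 0 (m 0) + Finsupp.single 1 (m 1) := by
    ext i; fin_cases i <;> simp
  have ne1 : (Finsupp.single (0:Fin 2) 1 + Finsupp.single 1 1) ≠ Finsupp.single 0 2 := by
    intro h; simpa using DFunLike.congr_fun h 1
  have ne2 : (Finsupp.single (1:Fin 2) 2) ≠ Finsupp.single 0 2 := by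
    intro h; simpa using DFunLike.congr_fun h 1
  have ne3 : (Finsupp.single (0:Fin 2) 2) ≠ Finsupp.single 0 1 + Finsupp.single 1 1 := by
    intro h; simpa using DFunLike.congr_fun h 1
  have ne4 : (Finsupp.single (1:Fin 2) 2) ≠ Finsupp.single 0 1 + Finsupp.single 1 1 := by
    intro h; simpa using DFunLike.congr_fun h 0
  have ne5 : (Finsupp.single (0:Fin 2) 2) ≠ Finsupp.single 1 2 := by
    intro h; simpa using DFunLike.congr_fun h 0
  have ne6 : (Finsupp.single (0:Fin 2) 1 + Finsupp.single 1 1) ≠ Finsupp.single 1 2 := by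
    intro h; simpa using DFunLike.congr_fun h 0
  by_cases h20 : (Finsupp.single (0 : Fin 2) 2) = m
  · subst h20; rw [if_pos rfl, if_neg ne1, if_neg ne2]; ring
  by_cases h11 : (Finsupp.single (0 : Fin 2) 1 + Finsupp.single 1 1) = m
  · subst h11; rw [if_pos rfl, if_neg ne3, if_neg ne4]; ring
  by_cases h02 : (Finsupp.single (1 : Fin 2) 2) = m
  · subst h02; rw [if_pos rfl, if_neg ne5, if_neg ne6]; ring
  · rw [if_neg h20, if_neg h11, if_neg h02]
    simp only [add_zero, mul_one]
    apply hf.coeff_eq_zero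
    intro hdeg
    have hsum : m 0 + m 1 = 2 := by
      have h1 : m.degree = m 0 + m 1 := by
        rw [Finsupp.degree_apply,
          Finset.sum_subset (Finset.subset_univ _)
            (fun i _ hi => Finsupp.notMem_support_iff.mp hi), Fin.sum_univ_two]
      omega
    have h0cases : m 0 = 0 ∨ m 0 = 1 ∨ m 0 = 2 := by omega
    rcases h0cases with h|h|h
    · exact h02 (by rw [hmrep, h, show m 1 = 2 by omega]; simp)
    · exact h11 (by rw [hmrep, h, show m 1 = 1 by omega])
    · exact h20 (by rw [hmrep, h, show m 1 = 0 by omega]; simp)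

lemma aux_scalar (a b c d e f j : ℂ)
    (hA : (a*j^2+b*j+c)^3 + (d*j^2+e*j+f)^3 = 0)
    (hB : (a*j^2+b*j+c)^2*(2*a*j+b) + (d*j^2+e*j+f)^2*(2*d*j+e) = 0)
    (hC : (a*j^2+b*j+c)^2*a + (a*j^2+b*j+c)*(2*a*j+b)^2
        + (d*j^2+e*j+f)^2*d + (d*j^2+e*j+f)*(2*d*j+e)^2 = 0)
    (hP : a*j^2+b*j+c ≠ 0) :
    ∃ μ : ℂ, d = μ*a ∧ e = μ*b ∧ f = μ*c := by
  set P := a*j^2+b*j+c with hPdef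
  set Q := d*j^2+e*j+f with hQdef
  set P' := 2*a*j+b with hP'def
  set Q' := 2*d*j+e with hQ'def
  obtain ⟨μ, hQμ⟩ : ∃ μ, Q = μ * P := ⟨Q/P, by field_simp⟩
  have hμ3 : μ^3 = -1 := by
    have h3 : μ^3 * P^3 = -1 * P^3 := by
      linear_combination hA - (Q^2 + μ*P*Q + μ^2*P^2) * hQμ
    exact mul_right_cancel₀ (pow_ne_zero 3 hP) h3
  have h5 : (Q' - μ*P') * P^2 = 0 := by
    linear_combination -μ*hB + μ*Q'*(Q+μ*P)*hQμ + P^2*Q'*hμ3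
  have hQ'eq : Q' = μ * P' := by
    rcases mul_eq_zero.mp h5 with h | h
    · exact sub_eq_zero.mp h
    · exact absurd h (pow_ne_zero 2 hP)
  have h6 : (a + μ^2*d) * P^2 = 0 := by
    linear_combination hC - (d*(Q+μ*P) + Q'^2)*hQμ - μ*P*(Q'+μ*P')*hQ'eq - P*P'^2*hμ3
  have h6' : a + μ^2*d = 0 := by
    rcases mul_eq_zero.mp h6 with h | h
    · exact h
    · exact absurd h (pow_ne_zero 2 hP)
  have hd : d = μ*a := by linear_combination -μ*h6' + d*hμ3
  have he : e = μ*b := by linear_combination hQ'eq - 2*j*hd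
  have hf : f = μ*c := by linear_combination hQμ - j^2*hd - j*he
  exact ⟨μ, hd, he, hf⟩

theorem stmt_19 :
    ¬ ∃ f₁ f₂ : MvPolynomial (Fin 2) ℂ,
      f₁.IsHomogeneous 2 ∧ f₂.IsHomogeneous 2 ∧
      (∀ c : ℂ, f₂ ≠ c • f₁) ∧ (∀ c : ℂ, f₁ ≠ c • f₂) ∧
      ((X 0)^2 + (X 1)^2 : MvPolynomial (Fin 2) ℂ)^3 = f₁^3 + f₂^3 := by
  rintro ⟨f₁, f₂, h₁, h₂, h3, h4, heq⟩
  obtain ⟨a, b, c, hf1⟩ := rep2 h₁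
  obtain ⟨d, e, f, hf2⟩ := rep2 h₂
  rw [hf1, hf2] at heq
  have H := congrArg (fun p => MvPolynomial.aeval ![Polynomial.X, (1 : Polynomial ℂ)] p) heq
  simp only [map_add, map_mul, map_pow, aeval_X, aeval_C, Matrix.cons_val_zero,
    Matrix.cons_val_one, Matrix.head_cons, Polynomial.algebraMap_eq] at H
  have h0 : (Complex.I)^2 + 1 = 0 := by simp [Complex.I_sq]
  have e0 := congrArg (Polynomial.eval Complex.I) H
  have e0' := congrArg (Polynomial.eval (-Complex.I)) H
  have e1 := congrArg (Polynomial.eval Complex.I) (congrArg Polynomial.derivative H)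
  have e1' := congrArg (Polynomial.eval (-Complex.I)) (congrArg Polynomial.derivative H)
  have e2 := congrArg (Polynomial.eval Complex.I)
    (congrArg Polynomial.derivative (congrArg Polynomial.derivative H))
  have e2' := congrArg (Polynomial.eval (-Complex.I))
    (congrArg Polynomial.derivative (congrArg Polynomial.derivative H))
  simp only [Polynomial.derivative_add, Polynomial.derivative_pow, Polynomial.derivative_mul,
    Polynomial.derivative_C, Polynomial.derivative_X, Polynomial.derivative_one,
    Polynomial.eval_add, Polynomial.eval_mul, Polynomial.eval_pow, Polynomial.eval_C,
    Polynomial.eval_X, Polynomial.eval_one, Polynomial.eval_natCast, mul_one, one_pow,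
    zero_mul, mul_zero, add_zero, zero_add, Nat.cast_ofNat] at e0 e0' e1 e1' e2 e2'
  norm_num at e1 e1' e2 e2'
  have hA : (a*Complex.I^2+b*Complex.I+c)^3 + (d*Complex.I^2+e*Complex.I+f)^3 = 0 := by
    linear_combination -e0 + (Complex.I^2+1)^2*h0
  have hB : (a*Complex.I^2+b*Complex.I+c)^2*(2*a*Complex.I+b)
      + (d*Complex.I^2+e*Complex.I+f)^2*(2*d*Complex.I+e) = 0 := by
    linear_combination (-1/3)*e1 + (a*(2*a*Complex.I+b)*((a*Complex.I^2+b*Complex.I+c)+(-a+b*Complex.I+c)) + d*(2*d*Complex.I+e)*((d*Complex.I^2+e*Complex.I+f)+(-d+e*Complex.I+f)))*h0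
  have hC : (a*Complex.I^2+b*Complex.I+c)^2*a + (a*Complex.I^2+b*Complex.I+c)*(2*a*Complex.I+b)^2
      + (d*Complex.I^2+e*Complex.I+f)^2*d + (d*Complex.I^2+e*Complex.I+f)*(2*d*Complex.I+e)^2 = 0 := by
    linear_combination (-1/6)*e2 + (a^2*((a*Complex.I^2+b*Complex.I+c)+(-a+b*Complex.I+c)) + a*(2*a*Complex.I+b)^2 + d^2*((d*Complex.I^2+e*Complex.I+f)+(-d+e*Complex.I+f)) + d*(2*d*Complex.I+e)^2)*h0
  have hA' : (a*(-Complex.I)^2+b*(-Complex.I)+c)^3 + (d*(-Complex.I)^2+e*(-Complex.I)+f)^3 = 0 := by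
    linear_combination -e0' + (Complex.I^2+1)^2*h0
  have hB' : (a*(-Complex.I)^2+b*(-Complex.I)+c)^2*(2*a*(-Complex.I)+b)
      + (d*(-Complex.I)^2+e*(-Complex.I)+f)^2*(2*d*(-Complex.I)+e) = 0 := by
    linear_combination (-1/3)*e1' + (a*(2*a*(-Complex.I)+b)*((a*(-Complex.I)^2+b*(-Complex.I)+c)+(-a+-(b*Complex.I)+c)) + d*(2*d*(-Complex.I)+e)*((d*(-Complex.I)^2+e*(-Complex.I)+f)+(-d+-(e*Complex.I)+f)))*h0
  have hC' : (a*(-Complex.I)^2+b*(-Complex.I)+c)^2*a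
      + (a*(-Complex.I)^2+b*(-Complex.I)+c)*(2*a*(-Complex.I)+b)^2
      + (d*(-Complex.I)^2+e*(-Complex.I)+f)^2*d
      + (d*(-Complex.I)^2+e*(-Complex.I)+f)*(2*d*(-Complex.I)+e)^2 = 0 := by
    linear_combination (-1/6)*e2' + (a^2*((a*(-Complex.I)^2+b*(-Complex.I)+c)+(-a+-(b*Complex.I)+c)) + a*(2*a*(-Complex.I)+b)^2 + d^2*((d*(-Complex.I)^2+e*(-Complex.I)+f)+(-d+-(e*Complex.I)+f)) + d*(2*d*(-Complex.I)+e)^2)*h0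
  by_cases hP : a*Complex.I^2+b*Complex.I+c = 0
  · by_cases hR : a*(-Complex.I)^2+b*(-Complex.I)+c = 0
    · -- both P and R vanish: f₁, f₂ multiples of x²+y²
      have hQ0 : d*Complex.I^2+e*Complex.I+f = 0 := by
        have h' : (d*Complex.I^2+e*Complex.I+f)^3 = 0 := by
          linear_combination hA - (a*Complex.I^2+b*Complex.I+c)^2*hP
        exact pow_eq_zero_iff (three_ne_zero) |>.mp h'
      have hS0 : d*(-Complex.I)^2+e*(-Complex.I)+f = 0 := by
        have h' : (d*(-Complex.I)^2+e*(-Complex.I)+f)^3 = 0 := by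
          linear_combination hA' - (a*(-Complex.I)^2+b*(-Complex.I)+c)^2*hR
        exact pow_eq_zero_iff (three_ne_zero) |>.mp h'
      have hb : b = 0 := by
        have h2 : b*Complex.I = 0 := by linear_combination (hP - hR)/2
        rcases mul_eq_zero.mp h2 with h | h
        · exact h
        · exact absurd h Complex.I_ne_zero
      have hc : c = a := by linear_combination (hP + hR)/2 - a*h0
      have he : e = 0 := by
        have h2 : e*Complex.I = 0 := by linear_combination (hQ0 - hS0)/2
        rcases mul_eq_zero.mp h2 with h | h
        · exact h
        · exact absurd h Complex.I_ne_zero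
      have hfd : f = d := by linear_combination (hQ0 + hS0)/2 - d*h0
      by_cases ha : a = 0
      · refine h4 0 ?_
        rw [hf1, hb, hc, ha]
        simp
      · refine h3 (d/a) ?_
        have hCd : (C d : MvPolynomial (Fin 2) ℂ) = C (d/a) * C a := by
          rw [← map_mul, div_mul_cancel₀ d ha]
        rw [hf2, hf1, smul_eq_C_mul, hb, hc, he, hfd, hCd]
        simp only [map_zero]
        ring
    · obtain ⟨μ, hd, he, hf⟩ := aux_scalar a b c d e f (-Complex.I) hA' hB' hC' hR
      refine h3 μ ?_
      rw [hf2, hf1, smul_eq_C_mul, hd, he, hf]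
      simp only [map_mul]
      ring
  · obtain ⟨μ, hd, he, hf⟩ := aux_scalar a b c d e f Complex.I hA hB hC hP
    refine h3 μ ?_
    rw [hf2, hf1, smul_eq_C_mul, hd, he, hf]
    simp only [map_mul]
    ring
end
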